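/- Pfaffian-determinant decomposition: let A be a skew-symmetric matrix indexed by V and B a matrix with rows indexed by V and columns indexed by V' with |V'| ≤ |V|. Then Pf C = Σ_{U ⊆ V, |U| = |V| - |V'|} σ_U · Pf A[U] · det B[V \ U, V'], where C is the skew-symmetric block matrix [[A, B], [-B^T, O]] indexed by V ∪ V' and σ_U = ±1 is a sign depending only on U. -/

import Mathlib

open Matrix

open Matrix

/-- The Pfaffian of an `n × n` matrix (intended for skew-symmetric matrices),
defined as the signed sum over perfect matchings of the index set: each matching
is encoded by the permutation listing its pairs `(a₁,b₁),(a₂,b₂),…` with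
`aᵢ < bᵢ` and `a₁ < a₂ < ⋯`. For odd `n` the Pfaffian is `0`. -/
noncomputable def pfaffian {n : ℕ} {K : Type*} [Field K]
    (A : Matrix (Fin n) (Fin n) K) : K :=
  if Even n then
    ∑ σ ∈ Finset.univ.filter (fun σ : Equiv.Perm (Fin n) =>
        (∀ i j : Fin n, (i : ℕ) % 2 = 0 → (j : ℕ) = (i : ℕ) + 1 → σ i < σ j) ∧
        (∀ i j : Fin n, (i : ℕ) % 2 = 0 → (j : ℕ) % 2 = 0 → i < j → σ i < σ j)),
      ((Equiv.Perm.sign σ : ℤ) : K) *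
        ∏ i : Fin n,
          (if h : (i : ℕ) % 2 = 0 ∧ (i : ℕ) + 1 < n then
            A (σ i) (σ ⟨(i : ℕ) + 1, h.2⟩) else 1)
  else 0

/-- The Pfaffian of the principal submatrix `A[U]`, read off in the order
induced by the linear order on the index type. -/
noncomputable def pfSub {ι K : Type*} [LinearOrder ι] [Field K]
    (A : Matrix ι ι K) (U : Finset ι) : K :=
  pfaffian (A.submatrix (fun i : Fin U.card => ((U.orderIsoOfFin rfl) i : ι))
    (fun j : Fin U.card => ((U.orderIsoOfFin rfl) j : ι)))

namespace PfAux

open Equiv Finset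

variable {N m' : ℕ}

/-- pair-position equivalence: `(k, r) ↦ 2k + r`. -/
def PE (hN : N = 2 * m') : Fin m' × Fin 2 ≃ Fin N where
  toFun x := ⟨2 * x.1 + x.2, by omega⟩
  invFun p := (⟨p / 2, by omega⟩, ⟨p % 2, by omega⟩)
  left_inv := by rintro ⟨⟨k, hk⟩, ⟨r, hr⟩⟩; simp only; ext <;> simp <;> omega
  right_inv := by rintro ⟨p, hp⟩; simp only; ext; simp; omega

lemma PE_val (hN : N = 2 * m') (x : Fin m' × Fin 2) :
    (PE hN x : ℕ) = 2 * x.1 + x.2 := rfl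

lemma PE_symm_fst (hN : N = 2 * m') (p : Fin N) :
    (((PE hN).symm p).1 : ℕ) = p / 2 := rfl

lemma PE_symm_snd (hN : N = 2 * m') (p : Fin N) :
    (((PE hN).symm p).2 : ℕ) = p % 2 := rfl

/-- the canonical encodings filter (must match the one in `pfaffian`). -/
def Fcanon (n : ℕ) : Finset (Equiv.Perm (Fin n)) :=
  Finset.univ.filter (fun σ : Equiv.Perm (Fin n) =>
        (∀ i j : Fin n, (i : ℕ) % 2 = 0 → (j : ℕ) = (i : ℕ) + 1 → σ i < σ j) ∧
        (∀ i j : Fin n, (i : ℕ) % 2 = 0 → (j : ℕ) % 2 = 0 → i < j → σ i < σ j))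

variable {K : Type*} [Field K]

/-- sign as an element of `K`. -/
def sgn (σ : Equiv.Perm (Fin N)) : K := ((Equiv.Perm.sign σ : ℤ) : K)

lemma sgn_mul (σ τ : Equiv.Perm (Fin N)) : (sgn (σ * τ) : K) = sgn σ * sgn τ := by
  simp [sgn]

def pterm (hN : N = 2 * m') (M : Matrix (Fin N) (Fin N) K) (σ : Equiv.Perm (Fin N)) : K :=
  sgn σ * ∏ k : Fin m', M (σ (PE hN (k, 0))) (σ (PE hN (k, 1)))

lemma prod_dite_eq (hN : N = 2 * m') (M : Matrix (Fin N) (Fin N) K) (σ : Equiv.Perm (Fin N)) :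
    (∏ i : Fin N,
        (if h : (i : ℕ) % 2 = 0 ∧ (i : ℕ) + 1 < N then
          M (σ i) (σ ⟨(i : ℕ) + 1, h.2⟩) else 1)) =
      ∏ k : Fin m', M (σ (PE hN (k, 0))) (σ (PE hN (k, 1))) := by
  rw [← Equiv.prod_comp (PE hN)]
  rw [Fintype.prod_prod_type]
  refine Finset.prod_congr rfl (fun k _ => ?_)
  rw [Fin.prod_univ_two]
  have h0 : ((PE hN (k, 0) : Fin N) : ℕ) = 2 * k := by simp [PE_val]
  have h1 : ((PE hN (k, 1) : Fin N) : ℕ) = 2 * k + 1 := by simp [PE_val]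
  have hc : ((PE hN (k, 0) : Fin N) : ℕ) % 2 = 0 ∧ ((PE hN (k, 0) : Fin N) : ℕ) + 1 < N := by
    constructor
    · omega
    · rw [h0]; have := k.isLt; omega
  rw [dif_pos hc]
  have hc1 : ¬ (((PE hN (k, 1) : Fin N) : ℕ) % 2 = 0 ∧ ((PE hN (k, 1) : Fin N) : ℕ) + 1 < N) := by
    rw [h1]; omega
  rw [dif_neg hc1, mul_one]
  have he : (⟨((PE hN (k, 0) : Fin N) : ℕ) + 1, hc.2⟩ : Fin N) = PE hN (k, 1) := by
    ext; simp [PE_val]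
  rw [he]

lemma pf_eq_sum (hN : N = 2 * m') (M : Matrix (Fin N) (Fin N) K) :
    pfaffian M = ∑ σ ∈ Fcanon N, pterm hN M σ := by
  rw [pfaffian, if_pos ⟨m', by omega⟩]
  exact Finset.sum_congr rfl (fun σ _ => by rw [pterm, sgn, prod_dite_eq hN])

lemma mem_Fcanon (hN : N = 2 * m') (σ : Equiv.Perm (Fin N)) :
    σ ∈ Fcanon N ↔
      (∀ k : Fin m', σ (PE hN (k, 0)) < σ (PE hN (k, 1))) ∧
      (∀ k l : Fin m', k < l → σ (PE hN (k, 0)) < σ (PE hN (l, 0))) := by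
  rw [Fcanon, Finset.mem_filter]
  simp only [Finset.mem_univ, true_and]
  constructor
  · rintro ⟨h1, h2⟩
    constructor
    · intro k
      exact h1 (PE hN (k, 0)) (PE hN (k, 1)) (by simp [PE_val]) (by simp [PE_val])
    · intro k l hkl
      refine h2 _ _ (by simp [PE_val]) (by simp [PE_val]) ?_
      simp only [Fin.lt_def, PE_val]
      have := Fin.lt_def.mp hkl
      omega
  · rintro ⟨h1, h2⟩
    constructor
    · intro i j hi hj
      have hiv : i = PE hN (⟨(i : ℕ) / 2, by omega⟩, 0) := by ext; simp [PE_val]; omega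
      have hjv : j = PE hN (⟨(i : ℕ) / 2, by have := j.isLt; omega⟩, 1) := by
        ext; simp [PE_val]; omega
      rw [hiv, hjv]
      exact h1 _
    · intro i j hi hj hij
      have hiv : i = PE hN (⟨(i : ℕ) / 2, by omega⟩, 0) := by ext; simp [PE_val]; omega
      have hjv : j = PE hN (⟨(j : ℕ) / 2, by omega⟩, 0) := by ext; simp [PE_val]; omega
      rw [hiv, hjv]
      refine h2 _ _ ?_
      simp only [Fin.lt_def]
      have := Fin.lt_def.mp hij
      omega

/-- the position flip `2k ↔ 2k+1`. -/
def flipE (hN : N = 2 * m') : Equiv.Perm (Fin N) :=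
  (PE hN).permCongr (Equiv.prodCongrRight (fun _ => Equiv.swap (0 : Fin 2) 1))

lemma flipE_PE (hN : N = 2 * m') (k : Fin m') (r : Fin 2) :
    flipE hN (PE hN (k, r)) = PE hN (k, Equiv.swap (0 : Fin 2) 1 r) := by
  simp [flipE, Equiv.permCongr_apply]

lemma swap01_zero : Equiv.swap (0 : Fin 2) 1 0 = 1 := by simp
lemma swap01_one : Equiv.swap (0 : Fin 2) 1 1 = 0 := by simp

lemma flipE_ne (hN : N = 2 * m') (p : Fin N) : flipE hN p ≠ p := by
  obtain ⟨⟨k, r⟩, rfl⟩ := (PE hN).surjective p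
  rw [flipE_PE]
  intro h
  have := ((PE hN).injective h)
  have : Equiv.swap (0 : Fin 2) 1 r = r := (Prod.ext_iff.mp this).2
  fin_cases r <;> simp_all

lemma flipE_flipE (hN : N = 2 * m') (p : Fin N) : flipE hN (flipE hN p) = p := by
  obtain ⟨⟨k, r⟩, rfl⟩ := (PE hN).surjective p
  rw [flipE_PE, flipE_PE]
  congr 1
  ext
  · rfl
  · simp only
    fin_cases r <;> simp

def invol (hN : N = 2 * m') (σ : Equiv.Perm (Fin N)) : Equiv.Perm (Fin N) :=
  σ * flipE hN * σ⁻¹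

lemma invol_apply (hN : N = 2 * m') (σ : Equiv.Perm (Fin N)) (p : Fin N) :
    invol hN σ (σ p) = σ (flipE hN p) := by
  simp [invol]

def IsFPF (π : Equiv.Perm (Fin N)) : Prop := (∀ x, π (π x) = x) ∧ ∀ x, π x ≠ x

lemma isFPF_invol (hN : N = 2 * m') (σ : Equiv.Perm (Fin N)) : IsFPF (invol hN σ) := by
  constructor
  · intro x
    obtain ⟨p, rfl⟩ := σ.surjective x
    rw [invol_apply, invol_apply, flipE_flipE]
  · intro x h
    obtain ⟨p, rfl⟩ := σ.surjective x
    rw [invol_apply] at h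
    exact flipE_ne hN p (σ.injective h)

end PfAux

namespace PfAux2

open Equiv Finset PfAux
open scoped Classical

lemma fin2cases : ∀ r : Fin 2, r = 0 ∨ r = 1 := by decide

variable {N m' : ℕ} {K : Type*} [Field K]

/-- pair minima of an involution. -/
def mins (π : Equiv.Perm (Fin N)) : Finset (Fin N) :=
  Finset.univ.filter (fun x => x < π x)

lemma card_mins (hN : N = 2 * m') {π : Equiv.Perm (Fin N)} (h : IsFPF π) :
    (mins π).card = m' := by
  have hbij : (mins π).card = (Finset.univ.filter (fun x => ¬ x < π x)).card := by
    apply Finset.card_bij (fun x _ => π x)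
    · intro a ha
      simp only [mins, Finset.mem_filter, Finset.mem_univ, true_and] at ha ⊢
      rw [h.1 a]
      exact not_lt.mpr ha.le
    · intro a ha b hb hab
      exact π.injective hab
    · intro b hb
      simp only [mins, Finset.mem_filter, Finset.mem_univ, true_and] at hb ⊢
      refine ⟨π b, ?_, h.1 b⟩
      rw [h.1 b]
      rcases lt_or_gt_of_ne (h.2 b) with h' | h'
      · exact h'
      · exact absurd h' hb
  have key : (mins π).card + (Finset.univ.filter (fun x => ¬ x < π x)).card = N := by
    rw [mins, Finset.card_filter_add_card_filter_not (p := fun x => x < π x)]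
    simp
  omega

/-- the increasing enumeration of pair minima (junk if not FPF). -/
noncomputable def minEmb (hN : N = 2 * m') (π : Equiv.Perm (Fin N)) : Fin m' → Fin N :=
  if h : IsFPF π then fun k => (mins π).orderEmbOfFin (card_mins hN h) k
  else fun k => PE hN (k, 0)

lemma minEmb_mem (hN : N = 2 * m') {π : Equiv.Perm (Fin N)} (h : IsFPF π) (k : Fin m') :
    minEmb hN π k < π (minEmb hN π k) := by
  rw [minEmb, dif_pos h]
  have hm := (mins π).orderEmbOfFin_mem (card_mins hN h) k
  simp only [mins, Finset.mem_filter] at hm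
  exact hm.2

lemma minEmb_strictMono (hN : N = 2 * m') {π : Equiv.Perm (Fin N)} (h : IsFPF π) :
    StrictMono (minEmb hN π) := by
  rw [minEmb, dif_pos h]
  exact ((mins π).orderEmbOfFin (card_mins hN h)).strictMono

/-- underlying function of the canonical encoding. -/
noncomputable def cF (hN : N = 2 * m') (π : Equiv.Perm (Fin N)) : Fin N → Fin N :=
  fun p =>
    if ((PE hN).symm p).2 = 0 then minEmb hN π ((PE hN).symm p).1
    else π (minEmb hN π ((PE hN).symm p).1)

lemma cF_PE0 (hN : N = 2 * m') (π : Equiv.Perm (Fin N)) (k : Fin m') :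
    cF hN π (PE hN (k, 0)) = minEmb hN π k := by
  rw [cF]
  simp

lemma cF_PE1 (hN : N = 2 * m') (π : Equiv.Perm (Fin N)) (k : Fin m') :
    cF hN π (PE hN (k, 1)) = π (minEmb hN π k) := by
  rw [cF]
  simp

lemma cF_injective (hN : N = 2 * m') {π : Equiv.Perm (Fin N)} (h : IsFPF π) :
    Function.Injective (cF hN π) := by
  have hmem : ∀ k, minEmb hN π k < π (minEmb hN π k) := minEmb_mem hN h
  have hinj : Function.Injective (minEmb hN π) := (minEmb_strictMono hN h).injective
  have hcross : ∀ k l : Fin m', minEmb hN π k ≠ π (minEmb hN π l) := by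
    intro k l he
    have h1 := hmem k
    have h2 := hmem l
    rw [he, h.1] at h1
    exact absurd (h1.trans h2) (lt_irrefl _)
  intro p q hpq
  obtain ⟨⟨k, r⟩, rfl⟩ := (PE hN).surjective p
  obtain ⟨⟨l, s⟩, rfl⟩ := (PE hN).surjective q
  rcases fin2cases r with rfl | rfl <;> rcases fin2cases s with rfl | rfl <;>
    simp only [cF_PE0, cF_PE1] at hpq
  · rw [hinj hpq]
  · exact absurd hpq (hcross k l)
  · exact absurd hpq.symm (hcross l k)
  · rw [hinj (π.injective hpq)]

/-- canonical encoding of a fixed-point-free involution as a permutation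
listing its pairs in the canonical order. -/
noncomputable def cInv (hN : N = 2 * m') (π : Equiv.Perm (Fin N)) : Equiv.Perm (Fin N) :=
  if h : IsFPF π then
    Equiv.ofBijective (cF hN π) ((Finite.injective_iff_bijective).mp (cF_injective hN h))
  else 1

lemma cInv_PE0 (hN : N = 2 * m') {π : Equiv.Perm (Fin N)} (h : IsFPF π) (k : Fin m') :
    cInv hN π (PE hN (k, 0)) = minEmb hN π k := by
  rw [cInv, dif_pos h]
  exact cF_PE0 hN π k

lemma cInv_PE1 (hN : N = 2 * m') {π : Equiv.Perm (Fin N)} (h : IsFPF π) (k : Fin m') :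
    cInv hN π (PE hN (k, 1)) = π (minEmb hN π k) := by
  rw [cInv, dif_pos h]
  exact cF_PE1 hN π k

lemma cInv_mem_Fcanon (hN : N = 2 * m') {π : Equiv.Perm (Fin N)} (h : IsFPF π) :
    cInv hN π ∈ Fcanon N := by
  rw [mem_Fcanon hN]
  constructor
  · intro k
    rw [cInv_PE0 hN h, cInv_PE1 hN h]
    exact minEmb_mem hN h k
  · intro k l hkl
    rw [cInv_PE0 hN h, cInv_PE0 hN h]
    exact minEmb_strictMono hN h hkl

lemma invol_cInv (hN : N = 2 * m') {π : Equiv.Perm (Fin N)} (h : IsFPF π) :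
    invol hN (cInv hN π) = π := by
  ext x
  obtain ⟨p, rfl⟩ := (cInv hN π).surjective x
  rw [invol_apply]
  obtain ⟨⟨k, r⟩, rfl⟩ := (PE hN).surjective p
  rw [flipE_PE]
  rcases fin2cases r with rfl | rfl
  · rw [swap01_zero, cInv_PE1 hN h, cInv_PE0 hN h]
  · rw [swap01_one, cInv_PE0 hN h, cInv_PE1 hN h, h.1]

/-- uniqueness: a canonical permutation is the canonical encoding of its involution. -/
lemma canon_eq (hN : N = 2 * m') {σ : Equiv.Perm (Fin N)} (hσ : σ ∈ Fcanon N) :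
    cInv hN (invol hN σ) = σ := by
  set π := invol hN σ with hπ
  have h : IsFPF π := isFPF_invol hN σ
  rw [mem_Fcanon hN] at hσ
  -- the even-position values of σ are exactly `mins π` in increasing order
  have hval : ∀ k : Fin m', σ (PE hN (k, 0)) ∈ mins π := by
    intro k
    simp only [mins, Finset.mem_filter, Finset.mem_univ, true_and]
    rw [hπ, invol_apply, flipE_PE, swap01_zero]
    exact hσ.1 k
  have hmono : StrictMono (fun k => σ (PE hN (k, 0))) := by
    intro k l hkl
    exact hσ.2 k l hkl
  have hemb : (fun k => σ (PE hN (k, 0))) = (mins π).orderEmbOfFin (card_mins hN h) := by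
    apply Finset.orderEmbOfFin_unique (card_mins hN h) (fun k => hval k) hmono
  have hminEmb : ∀ k, minEmb hN π k = σ (PE hN (k, 0)) := by
    intro k
    rw [minEmb, dif_pos h, ← hemb]
  ext x
  obtain ⟨⟨k, r⟩, rfl⟩ := (PE hN).surjective x
  rcases fin2cases r with rfl | rfl
  · rw [cInv_PE0 hN h, hminEmb]
  · rw [cInv_PE1 hN h, hminEmb, hπ, invol_apply, flipE_PE, swap01_zero]

end PfAux2

namespace PfAux3

open Equiv Finset PfAux PfAux2
open scoped Classical

variable {N m' : ℕ} {K : Type*} [Field K]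

lemma fin2swap : ∀ r s : Fin 2, r ≠ s → s = Equiv.swap (0 : Fin 2) 1 r := by decide

lemma term_eq_of_invol_eq (hN : N = 2 * m') (M : Matrix (Fin N) (Fin N) K)
    (hsk : ∀ x y, M y x = - M x y) {σ σ' : Equiv.Perm (Fin N)}
    (h : invol hN σ = invol hN σ') : pterm hN M σ = pterm hN M σ' := by
  set π := σ⁻¹ * σ' with hπdef
  have hσ' : σ' = σ * π := by rw [hπdef, mul_inv_cancel_left]
  have happ : ∀ p, σ' p = σ (π p) := fun p => by rw [hσ']; rfl
  -- π commutes with the flip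
  have hcp : ∀ p, flipE hN (π p) = π (flipE hN p) := by
    intro p
    have hh : (invol hN σ) (σ' p) = (invol hN σ') (σ' p) := by rw [h]
    rw [invol_apply] at hh
    have : σ (flipE hN (σ⁻¹ (σ' p))) = σ' (flipE hN p) := by
      simpa [invol, Equiv.Perm.mul_apply] using hh
    have h2 : flipE hN (π p) = σ⁻¹ (σ' (flipE hN p)) := by
      apply σ.injective
      rw [hπdef]
      simpa [Equiv.Perm.mul_apply] using this
    rw [h2]; rfl
  set c : Fin m' → Fin 2 := fun k => ((PE hN).symm (π (PE hN (k, 0)))).2 with hc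
  set b : Fin m' → Fin m' := fun k => ((PE hN).symm (π (PE hN (k, 0)))).1 with hb
  have h0 : ∀ k, π (PE hN (k, 0)) = PE hN (b k, c k) := by
    intro k
    conv_lhs => rw [← (PE hN).apply_symm_apply (π (PE hN (k, 0)))]
  have h1 : ∀ k, π (PE hN (k, 1)) = PE hN (b k, Equiv.swap (0 : Fin 2) 1 (c k)) := by
    intro k
    have : (PE hN (k, 1)) = flipE hN (PE hN (k, 0)) := by rw [flipE_PE, swap01_zero]
    rw [this, ← hcp, h0, flipE_PE]
  have binj : Function.Injective b := by
    intro k l hkl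
    by_cases hckl : c k = c l
    · have : π (PE hN (k, 0)) = π (PE hN (l, 0)) := by rw [h0, h0, hkl, hckl]
      have := (PE hN).injective (π.injective this)
      exact (Prod.ext_iff.mp this).1
    · have hcl : c l = Equiv.swap (0 : Fin 2) 1 (c k) := fin2swap _ _ hckl
      have : π (PE hN (l, 0)) = π (PE hN (k, 1)) := by rw [h0, h1, hkl, hcl]
      have := (PE hN).injective (π.injective this)
      have := (Prod.ext_iff.mp this).2
      simp at this
  let bperm : Equiv.Perm (Fin m') := Equiv.ofBijective b (Finite.injective_iff_bijective.mp binj)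
  have hbperm : ∀ k, bperm k = b k := fun k => rfl
  -- decomposition of π
  let flips : Equiv.Perm (Fin m' × Fin 2) :=
    Equiv.prodCongrRight (fun k => if c k = 0 then Equiv.refl (Fin 2) else Equiv.swap 0 1)
  let blow : Equiv.Perm (Fin m' × Fin 2) := Equiv.prodCongr bperm (Equiv.refl (Fin 2))
  have hdec : π = (PE hN).permCongr (flips.trans blow) := by
    ext p
    obtain ⟨⟨k, r⟩, rfl⟩ := (PE hN).surjective p
    rw [Equiv.permCongr_apply, Equiv.symm_apply_apply]
    have hib : (flips.trans blow) (k, r) =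
        (b k, (if c k = 0 then Equiv.refl (Fin 2) else Equiv.swap 0 1) r) := by
      simp only [flips, blow, Equiv.trans_apply, Equiv.prodCongrRight_apply,
        Equiv.prodCongr_apply, Prod.map, Equiv.refl_apply, hbperm]
    rw [hib]
    rcases fin2cases r with rfl | rfl
    · rw [h0]
      congr 1
      rcases fin2cases (c k) with h' | h' <;> rw [h'] <;>
        simp [Equiv.swap_apply_left, Equiv.swap_apply_right]
    · rw [h1]
      congr 1
      rcases fin2cases (c k) with h' | h' <;> rw [h'] <;>
        simp [Equiv.swap_apply_left, Equiv.swap_apply_right]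
  -- sign of π
  have hsign : Equiv.Perm.sign π = ∏ k : Fin m', (if c k = 0 then 1 else (-1 : ℤˣ)) := by
    rw [hdec, Equiv.Perm.sign_permCongr]
    have hts : flips.trans blow = blow * flips := rfl
    rw [hts, _root_.map_mul]
    have hblow : Equiv.Perm.sign blow = 1 := by
      show Equiv.Perm.sign (Equiv.prodCongr bperm (Equiv.refl (Fin 2))) = 1
      rw [Equiv.prodCongr_refl_right, Equiv.Perm.sign_prodCongrLeft]
      rw [Fin.prod_univ_two]
      exact Int.units_mul_self _
    have hflips : Equiv.Perm.sign flips = ∏ k : Fin m', (if c k = 0 then 1 else (-1 : ℤˣ)) := by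
      show Equiv.Perm.sign (Equiv.prodCongrRight _) = _
      rw [Equiv.Perm.sign_prodCongrRight]
      refine Finset.prod_congr rfl (fun k _ => ?_)
      by_cases hck : c k = 0 <;> simp [hck, Equiv.Perm.sign_swap (by decide : (0 : Fin 2) ≠ 1)]
    rw [hblow, hflips, one_mul]
  -- the product part
  have hprod : (∏ k : Fin m', M (σ' (PE hN (k, 0))) (σ' (PE hN (k, 1)))) =
      (∏ k : Fin m', (if c k = 0 then (1 : K) else -1)) *
        ∏ k : Fin m', M (σ (PE hN (k, 0))) (σ (PE hN (k, 1))) := by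
    have hfac : ∀ k : Fin m', M (σ' (PE hN (k, 0))) (σ' (PE hN (k, 1))) =
        (if c k = 0 then (1 : K) else -1) *
          M (σ (PE hN (bperm k, 0))) (σ (PE hN (bperm k, 1))) := by
      intro k
      rw [happ, happ, h0, h1, hbperm]
      rcases fin2cases (c k) with h' | h'
      · rw [h', swap01_zero, if_pos rfl, one_mul]
      · rw [h', swap01_one, if_neg (by simp), hsk, neg_one_mul]
    rw [Finset.prod_congr rfl (fun k _ => hfac k), Finset.prod_mul_distrib]
    congr 1
    exact Equiv.prod_comp bperm (fun j => M (σ (PE hN (j, 0))) (σ (PE hN (j, 1))))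
  -- combine
  have hsgnπ : (sgn π : K) = ∏ k : Fin m', (if c k = 0 then (1 : K) else -1) := by
    rw [sgn, hsign]
    have h1 : ((∏ k : Fin m', (if c k = 0 then 1 else (-1 : ℤˣ)) : ℤˣ) : ℤ)
        = ∏ k : Fin m', (if c k = 0 then (1 : ℤ) else -1) := by
      rw [← Units.coeHom_apply, map_prod]
      exact Finset.prod_congr rfl (fun k _ => by split_ifs <;> rfl)
    rw [h1, Int.cast_prod]
    exact Finset.prod_congr rfl (fun k _ => by split_ifs <;> simp)
  have hPP : (∏ k : Fin m', (if c k = 0 then (1 : K) else -1)) *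
      (∏ k : Fin m', (if c k = 0 then (1 : K) else -1)) = 1 := by
    rw [← Finset.prod_mul_distrib]
    apply Finset.prod_eq_one
    intro k _
    split_ifs <;> ring
  rw [pterm, pterm, hσ', sgn_mul, hσ'.symm, hprod, hsgnπ]
  set P := ∏ k : Fin m', (if c k = 0 then (1 : K) else -1) with hP
  set base := ∏ k : Fin m', M (σ (PE hN (k, 0))) (σ (PE hN (k, 1))) with hbase
  calc (sgn σ : K) * base = sgn σ * (1 * base) := by rw [one_mul]
    _ = sgn σ * ((P * P) * base) := by rw [hPP]
    _ = sgn σ * P * (P * base) := by ring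

end PfAux3

namespace PfMain

open Equiv Finset PfAux PfAux2 PfAux3 Matrix
open scoped Classical

variable {n n' : ℕ} {K : Type*} [Field K]

def lo (x : Fin n) : Fin (n + n') := finSumFinEquiv (Sum.inl x)
def hi (j : Fin n') : Fin (n + n') := finSumFinEquiv (Sum.inr j)

lemma lo_val (x : Fin n) : ((lo x : Fin (n + n')) : ℕ) = x := by simp [lo]
lemma hi_val (j : Fin n') : ((hi j : Fin (n + n')) : ℕ) = n + j := by simp [hi]

lemma lo_inj : Function.Injective (lo : Fin n → Fin (n + n')) := fun x y h =>
  Sum.inl_injective (finSumFinEquiv.injective h)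
lemma hi_inj : Function.Injective (hi : Fin n' → Fin (n + n')) := fun x y h =>
  Sum.inr_injective (finSumFinEquiv.injective h)

lemma lo_or_hi (x : Fin (n + n')) : (∃ y, x = lo y) ∨ ∃ j, x = hi j := by
  obtain ⟨s, rfl⟩ := finSumFinEquiv.surjective x
  rcases s with y | j
  · exact Or.inl ⟨y, rfl⟩
  · exact Or.inr ⟨j, rfl⟩

section Entries

variable (A : Matrix (Fin n) (Fin n) K) (B : Matrix (Fin n) (Fin n') K)

def Mmat (A : Matrix (Fin n) (Fin n) K) (B : Matrix (Fin n) (Fin n') K) :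
    Matrix (Fin (n + n')) (Fin (n + n')) K :=
  (Matrix.reindex finSumFinEquiv finSumFinEquiv) (Matrix.fromBlocks A B (-Bᵀ) 0)

lemma Mmat_ll (x y : Fin n) : Mmat A B (lo x) (lo y) = A x y := by
  simp [Mmat, lo]

lemma Mmat_lh (x : Fin n) (j : Fin n') : Mmat A B (lo x) (hi j) = B x j := by
  simp [Mmat, lo, hi]

lemma Mmat_hl (x : Fin n) (j : Fin n') : Mmat A B (hi j) (lo x) = -B x j := by
  simp [Mmat, lo, hi]

lemma Mmat_hh (x y : Fin (n + n')) (hx : n ≤ (x : ℕ)) (hy : n ≤ (y : ℕ)) :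
    Mmat A B x y = 0 := by
  rcases lo_or_hi x with ⟨z, rfl⟩ | ⟨j, rfl⟩
  · rw [lo_val] at hx; exact absurd z.isLt (not_lt.mpr hx)
  rcases lo_or_hi y with ⟨z, rfl⟩ | ⟨k, rfl⟩
  · rw [lo_val] at hy; exact absurd z.isLt (not_lt.mpr hy)
  simp [Mmat, hi]

lemma Mmat_skew (hA : Aᵀ = -A) (x y : Fin (n + n')) : Mmat A B y x = - Mmat A B x y := by
  have hA' : ∀ a b : Fin n, A b a = - A a b := by
    intro a b
    have := congrFun (congrFun hA a) b
    simpa [Matrix.transpose_apply] using this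
  rcases lo_or_hi x with ⟨z, rfl⟩ | ⟨j, rfl⟩ <;> rcases lo_or_hi y with ⟨w, rfl⟩ | ⟨k, rfl⟩
  · rw [Mmat_ll, Mmat_ll]; exact hA' z w
  · rw [Mmat_lh, Mmat_hl]
  · rw [Mmat_hl, Mmat_lh]; ring
  · rw [Mmat_hh _ _ _ _ (by rw [hi_val]; omega) (by rw [hi_val]; omega),
      Mmat_hh _ _ _ _ (by rw [hi_val]; omega) (by rw [hi_val]; omega), neg_zero]

end Entries

def twoSplit (α : Type*) : α × Fin 2 ≃ α ⊕ α where
  toFun x := if x.2 = 0 then Sum.inl x.1 else Sum.inr x.1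
  invFun := Sum.elim (fun a => (a, 0)) (fun a => (a, 1))
  left_inv := by
    rintro ⟨a, r⟩
    rcases fin2cases r with rfl | rfl <;> simp
  right_inv := by rintro (a | a) <;> simp

section UStuff

lemma hUc (hn : n' ≤ n) (U : Finset (Fin n)) (hU : U.card = n - n') : Uᶜ.card = n' := by
  rw [Finset.card_compl, Fintype.card_fin, hU]; omega

noncomputable def eU (U : Finset (Fin n)) (hU : U.card = n - n') : Fin (n - n') → Fin n :=
  U.orderEmbOfFin hU

noncomputable def eUc (hn : n' ≤ n) (U : Finset (Fin n)) (hU : U.card = n - n') :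
    Fin n' → Fin n := Uᶜ.orderEmbOfFin (hUc hn U hU)

lemma eU_mem (U : Finset (Fin n)) (hU : U.card = n - n') (a : Fin (n - n')) : eU U hU a ∈ U := Finset.orderEmbOfFin_mem _ _ _
lemma eUc_mem (hn : n' ≤ n) (U : Finset (Fin n)) (hU : U.card = n - n') (j : Fin n') : eUc hn U hU j ∈ Uᶜ := Finset.orderEmbOfFin_mem _ _ _

lemma eU_inj (U : Finset (Fin n)) (hU : U.card = n - n') : Function.Injective (eU U hU) := (U.orderEmbOfFin hU).injective
lemma eUc_inj (hn : n' ≤ n) (U : Finset (Fin n)) (hU : U.card = n - n') : Function.Injective (eUc hn U hU) := (Uᶜ.orderEmbOfFin _).injective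

lemma eU_surj (U : Finset (Fin n)) (hU : U.card = n - n') {x : Fin n} (hx : x ∈ U) : ∃ a, eU U hU a = x := by
  have : x ∈ Set.range (U.orderEmbOfFin hU) := by
    rw [Finset.range_orderEmbOfFin]; exact hx
  exact this

lemma eUc_surj (hn : n' ≤ n) (U : Finset (Fin n)) (hU : U.card = n - n') {x : Fin n} (hx : x ∈ Uᶜ) : ∃ a, eUc hn U hU a = x := by
  have : x ∈ Set.range (Uᶜ.orderEmbOfFin (hUc hn U hU)) := by
    rw [Finset.range_orderEmbOfFin]; exact hx
  exact this

noncomputable def lowE (hn : n' ≤ n) (U : Finset (Fin n)) (hU : U.card = n - n') :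
    Fin (n - n') ⊕ Fin n' ≃ Fin n :=
  Equiv.ofBijective (Sum.elim (eU U hU) (eUc hn U hU)) (by
    rw [Fintype.bijective_iff_injective_and_card]
    constructor
    · rintro (a | a) (b | b) h <;> simp only [Sum.elim_inl, Sum.elim_inr] at h
      · rw [eU_inj U hU h]
      · exact absurd (h ▸ eU_mem U hU a) (Finset.mem_compl.mp (eUc_mem hn U hU b))
      · exact absurd (eU_mem U hU b) (Finset.mem_compl.mp (h ▸ eUc_mem hn U hU a))
      · rw [eUc_inj hn U hU h]
    · simp only [Fintype.card_sum, Fintype.card_fin]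
      omega)

noncomputable def strucE (hn : n' ≤ n) : Fin (n + n') ≃ Fin (n - n') ⊕ (Fin n' × Fin 2) :=
  (finCongr (by omega : n + n' = (n - n') + 2 * n')).trans
    (finSumFinEquiv.symm.trans
      (Equiv.sumCongr (Equiv.refl (Fin (n - n'))) (PE (rfl : 2 * n' = 2 * n')).symm))

noncomputable def valE (hn : n' ≤ n) (U : Finset (Fin n)) (hU : U.card = n - n') :
    Fin (n - n') ⊕ (Fin n' × Fin 2) ≃ Fin (n + n') :=
  (Equiv.sumCongr (Equiv.refl (Fin (n - n'))) (twoSplit (Fin n'))).trans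
    ((Equiv.sumAssoc (Fin (n - n')) (Fin n') (Fin n')).symm.trans
      ((Equiv.sumCongr (lowE hn U hU) (Equiv.refl (Fin n'))).trans finSumFinEquiv))

lemma valE_inl (hn : n' ≤ n) (U : Finset (Fin n)) (hU : U.card = n - n') (a : Fin (n - n')) : valE hn U hU (Sum.inl a) = lo (eU U hU a) := by
  simp [valE, lowE, lo]

lemma valE_inr0 (hn : n' ≤ n) (U : Finset (Fin n)) (hU : U.card = n - n') (j : Fin n') : valE hn U hU (Sum.inr (j, 0)) = lo (eUc hn U hU j) := by
  simp [valE, lowE, lo, twoSplit]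

lemma valE_inr1 (hn : n' ≤ n) (U : Finset (Fin n)) (hU : U.card = n - n') (j : Fin n') : valE hn U hU (Sum.inr (j, 1)) = hi j := by
  simp [valE, lowE, hi, twoSplit]

noncomputable def gU (hn : n' ≤ n) (U : Finset (Fin n)) (hU : U.card = n - n') :
    Equiv.Perm (Fin (n + n')) := (strucE hn).trans (valE hn U hU)

noncomputable def midE (σs : Equiv.Perm (Fin (n - n'))) (ρ : Equiv.Perm (Fin n')) :
    Equiv.Perm (Fin (n - n') ⊕ (Fin n' × Fin 2)) :=
  Equiv.sumCongr σs (Equiv.prodCongrLeft (fun r : Fin 2 => if r = 0 then ρ else Equiv.refl (Fin n')))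

noncomputable def repE (hn : n' ≤ n) (U : Finset (Fin n)) (hU : U.card = n - n')
    (σs : Equiv.Perm (Fin (n - n'))) (ρ : Equiv.Perm (Fin n')) :
    Equiv.Perm (Fin (n + n')) :=
  gU hn U hU * (strucE hn).symm.permCongr (midE σs ρ)

lemma repE_apply (hn : n' ≤ n) (U : Finset (Fin n)) (hU : U.card = n - n') (σs : Equiv.Perm (Fin (n - n'))) (ρ : Equiv.Perm (Fin n')) (p : Fin (n + n')) :
    repE hn U hU σs ρ p = valE hn U hU (midE σs ρ (strucE hn p)) := by
  simp [repE, gU, Equiv.permCongr_apply, Equiv.Perm.mul_apply]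

lemma sign_repE (hn : n' ≤ n) (U : Finset (Fin n)) (hU : U.card = n - n') (σs : Equiv.Perm (Fin (n - n'))) (ρ : Equiv.Perm (Fin n')) :
    Equiv.Perm.sign (repE hn U hU σs ρ) =
      Equiv.Perm.sign (gU hn U hU) * (Equiv.Perm.sign σs * Equiv.Perm.sign ρ) := by
  rw [repE, _root_.map_mul, Equiv.Perm.sign_permCongr, midE, Equiv.Perm.sign_sumCongr,
    Equiv.Perm.sign_prodCongrLeft, Fin.prod_univ_two]
  simp

end UStuff

end PfMain

namespace PfMain
open Equiv Finset PfAux PfAux2 PfAux3 Matrix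
open scoped Classical

variable {n n' m' m2 : ℕ} {K : Type*} [Field K]

lemma struc_low (hn : n' ≤ n) (hN : n + n' = 2 * m') (hq2 : n - n' = 2 * m2)
    (k : Fin m2) (r : Fin 2) :
    strucE hn (PE hN (⟨(k : ℕ), by omega⟩, r)) = Sum.inl (PE hq2 (k, r)) := by
  rw [strucE]
  simp only [Equiv.trans_apply, finCongr_apply]
  have hcast : Fin.cast (by omega : n + n' = (n - n') + 2 * n')
      (PE hN (⟨(k : ℕ), by omega⟩, r)) =
      Fin.castAdd (2 * n') (PE hq2 (k, r)) := by
    ext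
    simp [PE_val]
  rw [hcast, finSumFinEquiv_symm_apply_castAdd]
  simp

lemma struc_mix (hn : n' ≤ n) (hN : n + n' = 2 * m') (hq2 : n - n' = 2 * m2)
    (j : Fin n') (r : Fin 2) :
    strucE hn (PE hN (⟨m2 + (j : ℕ), by omega⟩, r)) = Sum.inr (j, r) := by
  rw [strucE]
  simp only [Equiv.trans_apply, finCongr_apply]
  have hcast : Fin.cast (by omega : n + n' = (n - n') + 2 * n')
      (PE hN (⟨m2 + (j : ℕ), by omega⟩, r)) =
      Fin.natAdd (n - n') (PE (rfl : 2 * n' = 2 * n') (j, r)) := by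
    ext
    simp [PE_val]
    omega
  rw [hcast, finSumFinEquiv_symm_apply_natAdd]
  simp

lemma repE_low (hn : n' ≤ n) (hN : n + n' = 2 * m') (hq2 : n - n' = 2 * m2)
    (U : Finset (Fin n)) (hU : U.card = n - n')
    (σs : Equiv.Perm (Fin (n - n'))) (ρ : Equiv.Perm (Fin n')) (k : Fin m2) (r : Fin 2) :
    repE hn U hU σs ρ (PE hN (⟨(k : ℕ), by omega⟩, r)) =
      lo (eU U hU (σs (PE hq2 (k, r)))) := by
  rw [repE_apply, struc_low hn hN hq2, midE]
  simp only [Equiv.sumCongr_apply, Sum.map_inl]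
  exact valE_inl hn U hU _

lemma repE_mix0 (hn : n' ≤ n) (hN : n + n' = 2 * m') (hq2 : n - n' = 2 * m2)
    (U : Finset (Fin n)) (hU : U.card = n - n')
    (σs : Equiv.Perm (Fin (n - n'))) (ρ : Equiv.Perm (Fin n')) (j : Fin n') :
    repE hn U hU σs ρ (PE hN (⟨m2 + (j : ℕ), by omega⟩, 0)) = lo (eUc hn U hU (ρ j)) := by
  rw [repE_apply, struc_mix hn hN hq2, midE]
  simp only [Equiv.sumCongr_apply, Sum.map_inr, Equiv.prodCongrLeft_apply]
  simp only [if_true]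
  exact valE_inr0 hn U hU _

lemma repE_mix1 (hn : n' ≤ n) (hN : n + n' = 2 * m') (hq2 : n - n' = 2 * m2)
    (U : Finset (Fin n)) (hU : U.card = n - n')
    (σs : Equiv.Perm (Fin (n - n'))) (ρ : Equiv.Perm (Fin n')) (j : Fin n') :
    repE hn U hU σs ρ (PE hN (⟨m2 + (j : ℕ), by omega⟩, 1)) = hi j := by
  rw [repE_apply, struc_mix hn hN hq2, midE]
  simp only [Equiv.sumCongr_apply, Sum.map_inr, Equiv.prodCongrLeft_apply]
  rw [if_neg (by decide : ¬ (1 : Fin 2) = 0)]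
  exact valE_inr1 hn U hU _

/-- the equivalence splitting `Fin m'` into `A`-pairs and `B`-pairs. -/
def esplit (hm : m2 + n' = m') : Fin m2 ⊕ Fin n' ≃ Fin m' :=
  finSumFinEquiv.trans (finCongr hm)

lemma esplit_inl (hm : m2 + n' = m') (a : Fin m2) :
    esplit hm (Sum.inl a) = ⟨(a : ℕ), by omega⟩ := by
  ext; simp [esplit]

lemma esplit_inr (hm : m2 + n' = m') (j : Fin n') :
    esplit hm (Sum.inr j) = ⟨m2 + (j : ℕ), by omega⟩ := by
  ext; simp [esplit]

lemma pterm_repE (hn : n' ≤ n) (hN : n + n' = 2 * m') (hq2 : n - n' = 2 * m2)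
    (U : Finset (Fin n)) (hU : U.card = n - n')
    (σs : Equiv.Perm (Fin (n - n'))) (ρ : Equiv.Perm (Fin n'))
    (A : Matrix (Fin n) (Fin n) K) (B : Matrix (Fin n) (Fin n') K) :
    pterm hN (Mmat A B) (repE hn U hU σs ρ) =
      (sgn (gU hn U hU) : K) *
        ((sgn σs) * ∏ k : Fin m2,
          A (eU U hU (σs (PE hq2 (k, 0)))) (eU U hU (σs (PE hq2 (k, 1))))) *
        ((sgn ρ) * ∏ j : Fin n', B (eUc hn U hU (ρ j)) j) := by
  have hm : m2 + n' = m' := by omega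
  rw [pterm]
  have hsgn : (sgn (repE hn U hU σs ρ) : K) = sgn (gU hn U hU) * ((sgn σs : K) * sgn ρ) := by
    rw [sgn, sign_repE hn U hU σs ρ]
    push_cast
    rfl
  rw [hsgn]
  have hprod : (∏ k : Fin m',
      Mmat A B (repE hn U hU σs ρ (PE hN (k, 0))) (repE hn U hU σs ρ (PE hN (k, 1)))) =
      (∏ k : Fin m2,
          A (eU U hU (σs (PE hq2 (k, 0)))) (eU U hU (σs (PE hq2 (k, 1))))) *
        ∏ j : Fin n', B (eUc hn U hU (ρ j)) j := by
    rw [← Equiv.prod_comp (esplit hm)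
      (fun k => Mmat A B (repE hn U hU σs ρ (PE hN (k, 0)))
        (repE hn U hU σs ρ (PE hN (k, 1))))]
    rw [Fintype.prod_sum_type]
    congr 1
    · refine Finset.prod_congr rfl (fun a _ => ?_)
      rw [esplit_inl hm, repE_low hn hN hq2, repE_low hn hN hq2, Mmat_ll]
    · refine Finset.prod_congr rfl (fun j _ => ?_)
      rw [esplit_inr hm, repE_mix0 hn hN hq2, repE_mix1 hn hN hq2, Mmat_lh]
  rw [hprod]
  ring

end PfMain

namespace PfMain
open Equiv Finset PfAux PfAux2 PfAux3 Matrix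
open scoped Classical

variable {n n' m' m2 : ℕ} {K : Type*} [Field K]

lemma involRep_loU (hn : n' ≤ n) (hN : n + n' = 2 * m') (hq2 : n - n' = 2 * m2)
    (U : Finset (Fin n)) (hU : U.card = n - n')
    (σs : Equiv.Perm (Fin (n - n'))) (ρ : Equiv.Perm (Fin n')) (a : Fin (n - n')) :
    invol hN (repE hn U hU σs ρ) (lo (eU U hU a)) = lo (eU U hU (invol hq2 σs a)) := by
  obtain ⟨⟨k, r⟩, hx⟩ := (PE hq2).surjective (σs⁻¹ a)
  have ha : σs (PE hq2 (k, r)) = a := by rw [hx]; exact σs.apply_symm_apply a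
  have h1 : lo (eU U hU a) = repE hn U hU σs ρ (PE hN (⟨(k : ℕ), by omega⟩, r)) := by
    rw [repE_low hn hN hq2, ha]
  rw [h1, invol_apply, flipE_PE, repE_low hn hN hq2]
  congr 2
  rw [← ha, invol_apply, flipE_PE]

lemma involRep_hi (hn : n' ≤ n) (hN : n + n' = 2 * m') (hq2 : n - n' = 2 * m2)
    (U : Finset (Fin n)) (hU : U.card = n - n')
    (σs : Equiv.Perm (Fin (n - n'))) (ρ : Equiv.Perm (Fin n')) (j : Fin n') :
    invol hN (repE hn U hU σs ρ) (hi j) = lo (eUc hn U hU (ρ j)) := by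
  have h1 : (hi j : Fin (n + n')) = repE hn U hU σs ρ (PE hN (⟨m2 + (j : ℕ), by omega⟩, 1)) := by
    rw [repE_mix1 hn hN hq2]
  rw [h1, invol_apply, flipE_PE, swap01_one, repE_mix0 hn hN hq2]

lemma involRep_loUc (hn : n' ≤ n) (hN : n + n' = 2 * m') (hq2 : n - n' = 2 * m2)
    (U : Finset (Fin n)) (hU : U.card = n - n')
    (σs : Equiv.Perm (Fin (n - n'))) (ρ : Equiv.Perm (Fin n')) (j : Fin n') :
    invol hN (repE hn U hU σs ρ) (lo (eUc hn U hU (ρ j))) = hi j := by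
  have h1 : lo (eUc hn U hU (ρ j)) = repE hn U hU σs ρ (PE hN (⟨m2 + (j : ℕ), by omega⟩, 0)) := by
    rw [repE_mix0 hn hN hq2]
  rw [h1, invol_apply, flipE_PE, swap01_zero, repE_mix1 hn hN hq2]

/-- "good" canonical permutations: every high point is matched to a low point. -/
def goodP (hN : n + n' = 2 * m') (σ : Equiv.Perm (Fin (n + n'))) : Prop :=
  ∀ x : Fin (n + n'), n ≤ (x : ℕ) → ((invol hN σ x : Fin (n + n')) : ℕ) < n

lemma pterm_bad_eq_zero (hN : n + n' = 2 * m')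
    (A : Matrix (Fin n) (Fin n) K) (B : Matrix (Fin n) (Fin n') K)
    (σ : Equiv.Perm (Fin (n + n'))) (hbad : ¬ goodP hN σ) :
    pterm hN (Mmat A B) σ = 0 := by
  rw [goodP] at hbad
  push_neg at hbad
  obtain ⟨x, hx, hx2⟩ := hbad
  obtain ⟨⟨k, r⟩, hp⟩ := (PE hN).surjective (σ⁻¹ x)
  have hσp : σ (PE hN (k, r)) = x := by rw [hp]; exact σ.apply_symm_apply x
  have hpair : invol hN σ x = σ (PE hN (k, Equiv.swap (0 : Fin 2) 1 r)) := by
    rw [← hσp, invol_apply, flipE_PE]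
  rw [pterm]
  apply mul_eq_zero_of_right
  apply Finset.prod_eq_zero (Finset.mem_univ k)
  rcases fin2cases r with rfl | rfl
  · have h0 : σ (PE hN (k, 0)) = x := hσp
    have h1 : σ (PE hN (k, 1)) = invol hN σ x := by rw [hpair, swap01_zero]
    rw [h0, h1]
    exact Mmat_hh A B _ _ hx (hx2)
  · have h1 : σ (PE hN (k, 1)) = x := hσp
    have h0 : σ (PE hN (k, 0)) = invol hN σ x := by rw [hpair, swap01_one]
    rw [h0, h1]
    exact Mmat_hh A B _ _ (hx2) hx

lemma rep_inj (hn : n' ≤ n) (hN : n + n' = 2 * m') (hq2 : n - n' = 2 * m2)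
    {U U' : Finset (Fin n)} (hU : U.card = n - n') (hU' : U'.card = n - n')
    {σs σs' : Equiv.Perm (Fin (n - n'))} {ρ ρ' : Equiv.Perm (Fin n')}
    (hσs : σs ∈ Fcanon (n - n')) (hσs' : σs' ∈ Fcanon (n - n'))
    (heq : invol hN (repE hn U hU σs ρ) = invol hN (repE hn U' hU' σs' ρ')) :
    U = U' ∧ σs = σs' ∧ ρ = ρ' := by
  have hsub : ∀ (V V' : Finset (Fin n)) (hV : V.card = n - n') (hV' : V'.card = n - n')
      (τ τ' : Equiv.Perm (Fin (n - n'))) (π π' : Equiv.Perm (Fin n')),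
      invol hN (repE hn V hV τ π) = invol hN (repE hn V' hV' τ' π') →
      ∀ x, x ∈ V → x ∈ V' := by
    intro V V' hV hV' τ τ' π π' he x hx
    obtain ⟨a, rfl⟩ := eU_surj V hV hx
    by_contra hx'
    have hxc : eU V hV a ∈ V'ᶜ := Finset.mem_compl.mpr hx'
    obtain ⟨i, hi'⟩ := eUc_surj hn V' hV' hxc
    have h1 := involRep_loU hn hN hq2 V hV τ π a
    have h2 : invol hN (repE hn V' hV' τ' π') (lo (eU V hV a)) = hi (π'⁻¹ i) := by
      rw [← hi']
      have h3 := involRep_loUc hn hN hq2 V' hV' τ' π' (π'⁻¹ i)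
      rwa [Equiv.Perm.inv_def, Equiv.apply_symm_apply] at h3
    rw [he, h2] at h1
    have hvv := congrArg (fun z : Fin (n + n') => (z : ℕ)) h1
    simp only [hi_val, lo_val] at hvv
    have := (eU V hV (invol hq2 τ a)).isLt
    omega
  have hUU : U = U' := by
    apply Finset.Subset.antisymm
    · intro x hx; exact hsub U U' hU hU' σs σs' ρ ρ' heq x hx
    · intro x hx; exact hsub U' U hU' hU σs' σs ρ' ρ heq.symm x hx
  subst hUU
  refine ⟨rfl, ?_, ?_⟩
  · have hinv : invol hq2 σs = invol hq2 σs' := by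
      ext a
      have h1 := involRep_loU hn hN hq2 U hU σs ρ a
      have h2 := involRep_loU hn hN hq2 U hU' σs' ρ' a
      have hee : eU U hU = eU U hU' := rfl
      rw [heq, hee] at h1
      rw [h1] at h2
      exact congrArg Fin.val (eU_inj U hU' (lo_inj h2))
    rw [← canon_eq hq2 hσs, ← canon_eq hq2 hσs', hinv]
  · ext j
    have h1 := involRep_hi hn hN hq2 U hU σs ρ j
    have h2 := involRep_hi hn hN hq2 U hU' σs' ρ' j
    have hee : eUc hn U hU = eUc hn U hU' := rfl
    rw [heq, hee] at h1
    rw [h1] at h2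
    exact congrArg Fin.val (eUc_inj hn U hU' (lo_inj h2))

end PfMain

namespace PfMain
open Equiv Finset PfAux PfAux2 PfAux3 Matrix
open scoped Classical

variable {n n' m' m2 : ℕ} {K : Type*} [Field K]

lemma rep_surj (hn : n' ≤ n) (hN : n + n' = 2 * m') (hq2 : n - n' = 2 * m2)
    (σ : Equiv.Perm (Fin (n + n'))) (hσ : σ ∈ Fcanon (n + n')) (hgood : goodP hN σ) :
    ∃ (U : Finset (Fin n)) (hU : U.card = n - n') (σs : Equiv.Perm (Fin (n - n')))
      (ρ : Equiv.Perm (Fin n')), σs ∈ Fcanon (n - n') ∧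
        invol hN (repE hn U hU σs ρ) = invol hN σ := by
  set π := invol hN σ with hπ
  have hfpf : IsFPF π := isFPF_invol hN σ
  set U : Finset (Fin n) := Finset.univ.filter (fun x : Fin n => ((π (lo x)) : ℕ) < n) with hUdef
  have hmemU : ∀ x : Fin n, x ∈ U ↔ ((π (lo x)) : ℕ) < n := by
    intro x; rw [hUdef, Finset.mem_filter]; simp
  -- the low partners of high points
  have hφlt : ∀ j : Fin n', ((π (hi j) : Fin (n + n')) : ℕ) < n := fun j =>
    hgood (hi j) (by rw [hi_val]; omega)
  set φ : Fin n' → Fin n := fun j => ⟨(π (hi j) : ℕ), hφlt j⟩ with hφdef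
  have hloφ : ∀ j, lo (φ j) = π (hi j) := by
    intro j; ext; rw [lo_val]
  have hφinj : Function.Injective φ := by
    intro j k h
    have h2 : (lo (φ j) : Fin (n + n')) = lo (φ k) := by rw [h]
    rw [hloφ, hloφ] at h2
    exact hi_inj (π.injective h2)
  have hUc_char : ∀ x : Fin n, x ∈ Uᶜ ↔ ∃ j, φ j = x := by
    intro x
    rw [Finset.mem_compl, hmemU]
    constructor
    · intro hx
      push_neg at hx
      have hlt : ((π (lo x)) : ℕ) - n < n' := by
        have := (π (lo x)).isLt; omega
      refine ⟨⟨(π (lo x) : ℕ) - n, hlt⟩, ?_⟩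
      have hhi : hi (⟨(π (lo x) : ℕ) - n, hlt⟩ : Fin n') = π (lo x) := by
        ext; rw [hi_val]; simp; omega
      apply lo_inj
      rw [hloφ, hhi, hfpf.1]
    · rintro ⟨j, rfl⟩
      rw [hloφ, hfpf.1, hi_val]
      omega
  have hUcc : Uᶜ = Finset.image φ Finset.univ := by
    ext x
    rw [hUc_char, Finset.mem_image]
    simp
  have hUcard : U.card = n - n' := by
    have h1 : Uᶜ.card = n' := by
      rw [hUcc, Finset.card_image_of_injective _ hφinj, Finset.card_univ, Fintype.card_fin]
    have h2 := Finset.card_add_card_compl U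
    rw [Fintype.card_fin] at h2
    omega
  -- small involution on U
  have hψlt : ∀ a : Fin (n - n'), ((π (lo (eU U hUcard a))) : ℕ) < n := by
    intro a
    exact (hmemU _).mp (eU_mem U hUcard a)
  set ψ : Fin (n - n') → Fin n := fun a => ⟨(π (lo (eU U hUcard a)) : ℕ), hψlt a⟩ with hψdef
  have hloψ : ∀ a, lo (ψ a) = π (lo (eU U hUcard a)) := by
    intro a; ext; rw [lo_val]
  have hψmem : ∀ a, ψ a ∈ U := by
    intro a
    rw [hmemU, hloψ, hfpf.1, lo_val]
    exact (eU U hUcard a).isLt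
  set τf : Fin (n - n') → Fin (n - n') :=
    fun a => (U.orderIsoOfFin hUcard).symm ⟨ψ a, hψmem a⟩ with hτfdef
  have hEUτ : ∀ a, eU U hUcard (τf a) = ψ a := by
    intro a
    show (U.orderEmbOfFin hUcard) _ = _
    rw [← Finset.coe_orderIsoOfFin_apply, hτfdef]
    simp
  have hτinvol : Function.Involutive τf := by
    intro a
    apply eU_inj U hUcard
    apply lo_inj
    rw [hEUτ, hloψ, hEUτ, hloψ, hfpf.1]
  have hτfpf : IsFPF hτinvol.toPerm := by
    constructor
    · intro x
      exact hτinvol x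
    · intro a ha
      have h2 : ψ a = eU U hUcard a := by
        rw [← hEUτ]
        show eU U hUcard (τf a) = _
        rw [show τf a = a from ha]
      have h3 : (lo (ψ a) : Fin (n + n')) = lo (eU U hUcard a) := by rw [h2]
      rw [hloψ] at h3
      exact hfpf.2 _ h3
  -- the permutation ρ
  have hφmem : ∀ j, φ j ∈ Uᶜ := fun j => (hUc_char _).mpr ⟨j, rfl⟩
  set ρ0 : Fin n' → Fin n' :=
    fun j => (Uᶜ.orderIsoOfFin (hUc hn U hUcard)).symm ⟨φ j, hφmem j⟩ with hρ0def
  have hEUcρ : ∀ j, eUc hn U hUcard (ρ0 j) = φ j := by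
    intro j
    show (Uᶜ.orderEmbOfFin _) _ = _
    rw [← Finset.coe_orderIsoOfFin_apply, hρ0def]
    simp
  have hρ0inj : Function.Injective ρ0 := by
    intro j k h
    apply hφinj
    rw [← hEUcρ, ← hEUcρ, h]
  set ρ : Equiv.Perm (Fin n') :=
    Equiv.ofBijective ρ0 ((Finite.injective_iff_bijective).mp hρ0inj) with hρdef
  have hρ0 : ∀ j, ρ j = ρ0 j := fun j => rfl
  set σs : Equiv.Perm (Fin (n - n')) := cInv hq2 hτinvol.toPerm with hσsdef
  have hσsF : σs ∈ Fcanon (n - n') := cInv_mem_Fcanon hq2 hτfpf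
  have hinvσs : invol hq2 σs = hτinvol.toPerm := invol_cInv hq2 hτfpf
  refine ⟨U, hUcard, σs, ρ, hσsF, ?_⟩
  ext x
  rcases lo_or_hi x with ⟨y, rfl⟩ | ⟨j, rfl⟩
  · by_cases hy : y ∈ U
    · obtain ⟨a, rfl⟩ := eU_surj U hUcard hy
      rw [involRep_loU hn hN hq2, hinvσs]
      have h5 : Function.Involutive.toPerm τf hτinvol a = τf a := rfl
      rw [h5, hEUτ, hloψ]
    · have hyc : y ∈ Uᶜ := Finset.mem_compl.mpr hy
      obtain ⟨j, rfl⟩ := (hUc_char y).mp hyc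
      have h2 : invol hN (repE hn U hUcard σs ρ) (lo (φ j)) = hi (ρ⁻¹ (ρ0 j)) := by
        have h1 : (lo (φ j) : Fin (n + n')) = lo (eUc hn U hUcard (ρ (ρ⁻¹ (ρ0 j)))) := by
          rw [Equiv.Perm.inv_def, Equiv.apply_symm_apply, hEUcρ]
        rw [h1, involRep_loUc hn hN hq2]
      have h3 : ρ⁻¹ (ρ0 j) = j := by
        rw [← hρ0]; exact ρ.symm_apply_apply j
      rw [h2, h3, hloφ, hfpf.1]
  · rw [involRep_hi hn hN hq2, hρ0, hEUcρ, hloφ]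

end PfMain

namespace PfMain
open Equiv Finset PfAux PfAux2 PfAux3 Matrix
open scoped Classical

variable {n n' m' m2 : ℕ} {K : Type*} [Field K]

lemma pf_reindex {a b : ℕ} (h : a = b) (M : Matrix (Fin a) (Fin a) K) :
    pfaffian ((Matrix.reindex (finCongr h) (finCongr h)) M) = pfaffian M := by
  subst h
  have hre : (Matrix.reindex (finCongr rfl) (finCongr rfl)) M = M := by
    ext i j
    simp [Matrix.reindex_apply]
  rw [hre]

lemma pfSub_expand (hq2 : n - n' = 2 * m2) (A : Matrix (Fin n) (Fin n) K)
    (U : Finset (Fin n)) (hU : U.card = n - n') :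
    pfSub A U = ∑ σs ∈ Fcanon (n - n'), (sgn σs : K) *
      ∏ k : Fin m2, A (eU U hU (σs (PE hq2 (k, 0)))) (eU U hU (σs (PE hq2 (k, 1)))) := by
  have hfun : ((fun i : Fin U.card => ((U.orderIsoOfFin rfl) i : Fin n)) ∘
      (finCongr hU).symm) = eU U hU := by
    apply Finset.orderEmbOfFin_unique
    · intro x
      exact (U.orderIsoOfFin rfl _).2
    · intro x y hxy
      apply (U.orderIsoOfFin rfl).strictMono
      exact hxy
  have h1 : pfSub A U = pfaffian ((A.submatrix
      (fun i : Fin U.card => ((U.orderIsoOfFin rfl) i : Fin n))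
      (fun i : Fin U.card => ((U.orderIsoOfFin rfl) i : Fin n)))) := rfl
  rw [h1, ← pf_reindex hU, Matrix.reindex_apply, Matrix.submatrix_submatrix, hfun,
    pf_eq_sum hq2]
  refine Finset.sum_congr rfl (fun σs _ => ?_)
  rfl

lemma det_expand (hn : n' ≤ n) (U : Finset (Fin n)) (hU : U.card = n - n')
    (B : Matrix (Fin n) (Fin n') K) :
    (B.submatrix (eUc hn U hU) id).det =
      ∑ ρ : Equiv.Perm (Fin n'), (sgn ρ : K) * ∏ j : Fin n', B (eUc hn U hU (ρ j)) j := by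
  rw [Matrix.det_apply']
  refine Finset.sum_congr rfl (fun ρ _ => ?_)
  rw [sgn]
  congr 1

end PfMain

open Equiv Finset PfAux PfAux2 PfAux3 PfMain Matrix
open scoped Classical

/-- Pfaffian–determinant decomposition: for skew-symmetric `A` (indexed by
`V = Fin n`) and a matrix `B` with rows `V` and columns `V' = Fin n'`, `n' ≤ n`,
the Pfaffian of `C = [[A, B], [-Bᵀ, 0]]` equals
`Σ_{U ⊆ V, |U| = |V| - |V'|} σ_U · Pf A[U] · det B[V ∖ U, V']` for signs
`σ_U = ±1` depending only on `U`. -/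
theorem pfaffian_det_decomposition {n n' : ℕ} (hn : n' ≤ n) {K : Type*} [Field K]
    (A : Matrix (Fin n) (Fin n) K) (hA : Aᵀ = -A) (hAd : ∀ i, A i i = 0)
    (B : Matrix (Fin n) (Fin n') K) :
    ∃ ε : Finset (Fin n) → K, (∀ U, ε U = 1 ∨ ε U = -1) ∧
      pfaffian ((Matrix.reindex finSumFinEquiv finSumFinEquiv)
          (Matrix.fromBlocks A B (-Bᵀ) 0)) =
        ∑ U ∈ (Finset.univ.filter
            (fun U : Finset (Fin n) => U.card = n - n')).attach,
          ε U.1 * pfSub A U.1 *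
            (B.submatrix (fun i : Fin n' =>
              (((U.1ᶜ).orderIsoOfFin (by
                have hU := (Finset.mem_filter.mp U.2).2
                rw [Finset.card_compl, Fintype.card_fin, hU]
                omega)) i : Fin n)) id).det := by
  classical
  by_cases hEv : Even (n + n')
  · -- even case
    obtain ⟨m'0, hm'0⟩ := hEv
    have hN : n + n' = 2 * m'0 := by omega
    have hq2 : n - n' = 2 * (m'0 - n') := by omega
    have hEv' : Even (n + n') := ⟨m'0, hm'0⟩
    refine ⟨fun U => if hU : U.card = n - n' then (sgn (gU hn U hU) : K) else 1, ?_, ?_⟩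
    · intro U
      dsimp only
      by_cases hU : U.card = n - n'
      · rw [dif_pos hU]
        rcases Int.units_eq_one_or (Equiv.Perm.sign (gU hn U hU)) with h | h
        · left; rw [sgn, h]; simp
        · right; rw [sgn, h]; simp
      · rw [dif_neg hU]; exact Or.inl rfl
    · have hL : (Matrix.reindex finSumFinEquiv finSumFinEquiv)
          (Matrix.fromBlocks A B (-Bᵀ) 0) = Mmat A B := rfl
      rw [hL, pf_eq_sum hN (Mmat A B)]
      rw [← Finset.sum_filter_add_sum_filter_not (Fcanon (n + n')) (goodP hN)]
      have hbad : ∑ σ ∈ (Fcanon (n + n')).filter (fun σ => ¬ goodP hN σ),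
          pterm hN (Mmat A B) σ = 0 :=
        Finset.sum_eq_zero fun σ hσ =>
          pterm_bad_eq_zero hN A B σ (Finset.mem_filter.mp hσ).2
      rw [hbad, add_zero]
      set S : Finset (Finset (Fin n)) :=
        Finset.univ.filter (fun U : Finset (Fin n) => U.card = n - n') with hS
      set F : Finset (Fin n) × Equiv.Perm (Fin (n - n')) × Equiv.Perm (Fin n') → K :=
        fun t =>
          if hU : t.1.card = n - n' then
            (sgn (gU hn t.1 hU) : K) *
              ((sgn t.2.1 : K) * ∏ k : Fin (m'0 - n'),
                A (eU t.1 hU (t.2.1 (PE hq2 (k, 0))))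
                  (eU t.1 hU (t.2.1 (PE hq2 (k, 1))))) *
              ((sgn t.2.2 : K) * ∏ j : Fin n', B (eUc hn t.1 hU (t.2.2 j)) j)
          else 0 with hF
      -- transform the right-hand side into a sum over triples
      have hRHS : (∑ U ∈ S.attach,
          (if hU : U.1.card = n - n' then (sgn (gU hn U.1 hU) : K) else 1) * pfSub A U.1 *
            (B.submatrix (fun i : Fin n' =>
              (((U.1ᶜ).orderIsoOfFin (by
                have hU := (Finset.mem_filter.mp U.2).2
                rw [Finset.card_compl, Fintype.card_fin, hU]
                omega)) i : Fin n)) id).det) =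
          ∑ t ∈ S ×ˢ ((Fcanon (n - n')) ×ˢ (Finset.univ : Finset (Equiv.Perm (Fin n')))),
            F t := by
        rw [Finset.sum_product]
        rw [← Finset.sum_attach S (fun U =>
          ∑ y ∈ (Fcanon (n - n')) ×ˢ (Finset.univ : Finset (Equiv.Perm (Fin n'))),
            F (U, y))]
        refine Finset.sum_congr rfl (fun x _ => ?_)
        have hc : x.1.card = n - n' := (Finset.mem_filter.mp x.2).2
        rw [dif_pos hc]
        have harg : (fun i : Fin n' =>
            (((x.1ᶜ).orderIsoOfFin (by
                have hU := (Finset.mem_filter.mp x.2).2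
                rw [Finset.card_compl, Fintype.card_fin, hU]
                omega)) i : Fin n)) = eUc hn x.1 hc := by
          funext i
          rw [Finset.coe_orderIsoOfFin_apply]
          rfl
        rw [harg, pfSub_expand hq2 A x.1 hc, det_expand hn x.1 hc B]
        rw [Finset.sum_product]
        have hdist : ∀ (c : K) (s1 : Finset (Equiv.Perm (Fin (n - n'))))
            (s2 : Finset (Equiv.Perm (Fin n'))) (f : Equiv.Perm (Fin (n - n')) → K)
            (g : Equiv.Perm (Fin n') → K),
            c * (∑ a ∈ s1, f a) * (∑ b ∈ s2, g b) = ∑ a ∈ s1, ∑ b ∈ s2, c * f a * g b := by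
          intro c s1 s2 f g
          rw [mul_assoc, Finset.sum_mul_sum, Finset.mul_sum]
          refine Finset.sum_congr rfl (fun a _ => ?_)
          rw [Finset.mul_sum]
          refine Finset.sum_congr rfl (fun b _ => ?_)
          ring
        rw [hdist]
        refine Finset.sum_congr rfl (fun σs hσs => ?_)
        refine Finset.sum_congr rfl (fun ρ _ => ?_)
        simp only [hF]
        rw [dif_pos hc]
      rw [hRHS]
      -- the bijection
      set RT : Finset (Fin n) × Equiv.Perm (Fin (n - n')) × Equiv.Perm (Fin n') →
          Equiv.Perm (Fin (n + n')) := fun t =>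
        if hU : t.1.card = n - n' then repE hn t.1 hU t.2.1 t.2.2 else 1 with hRT
      set P : Equiv.Perm (Fin (n + n')) →
          Finset (Fin n) × Equiv.Perm (Fin (n - n')) × Equiv.Perm (Fin n') → Prop :=
        fun σ t => t.2.1 ∈ Fcanon (n - n') ∧ ∃ hU : t.1.card = n - n',
          invol hN (repE hn t.1 hU t.2.1 t.2.2) = invol hN σ with hP
      refine Finset.sum_nbij'
        (i := fun σ => if h : ∃ t, P σ t then h.choose else (∅, 1, 1))
        (j := fun t => cInv hN (invol hN (RT t))) ?_ ?_ ?_ ?_ ?_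
      · -- maps into triples
        intro σ hσ
        have hσF := (Finset.mem_filter.mp hσ).1
        have hσG := (Finset.mem_filter.mp hσ).2
        obtain ⟨U, hU, σs, ρ, hσsF, hinv⟩ := rep_surj hn hN hq2 σ hσF hσG
        have hex : ∃ t, P σ t := ⟨(U, σs, ρ), hσsF, hU, hinv⟩
        rw [dif_pos hex]
        have hspec := hex.choose_spec
        obtain ⟨hF1, hU1, _⟩ := hspec
        rw [Finset.mem_product, Finset.mem_product]
        exact ⟨Finset.mem_filter.mpr ⟨Finset.mem_univ _, hU1⟩, hF1, Finset.mem_univ _⟩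
      · -- maps into good canonical perms
        intro t ht
        rw [Finset.mem_product, Finset.mem_product] at ht
        have hU : t.1.card = n - n' := (Finset.mem_filter.mp ht.1).2
        have hRTt : RT t = repE hn t.1 hU t.2.1 t.2.2 := by rw [hRT]; exact dif_pos hU
        have hfpf := isFPF_invol hN (RT t)
        rw [Finset.mem_filter]
        refine ⟨cInv_mem_Fcanon hN hfpf, ?_⟩
        intro x hx
        rw [invol_cInv hN hfpf, hRTt]
        rcases lo_or_hi x with ⟨y, rfl⟩ | ⟨j, rfl⟩
        · rw [lo_val] at hx
          exact absurd y.isLt (not_lt.mpr hx)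
        · rw [involRep_hi hn hN hq2, lo_val]
          exact (eUc hn t.1 hU (t.2.2 j)).isLt
      · -- left inverse
        intro σ hσ
        have hσF := (Finset.mem_filter.mp hσ).1
        have hσG := (Finset.mem_filter.mp hσ).2
        obtain ⟨U, hU, σs, ρ, hσsF, hinv⟩ := rep_surj hn hN hq2 σ hσF hσG
        have hex : ∃ t, P σ t := ⟨(U, σs, ρ), hσsF, hU, hinv⟩
        rw [dif_pos hex]
        obtain ⟨hF1, hU1, hinv1⟩ := hex.choose_spec
        have hRTc : RT hex.choose = repE hn hex.choose.1 hU1 hex.choose.2.1 hex.choose.2.2 := by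
          rw [hRT]; exact dif_pos hU1
        rw [hRTc, hinv1]
        exact canon_eq hN hσF
      · -- right inverse
        intro t ht
        rw [Finset.mem_product, Finset.mem_product] at ht
        have hU : t.1.card = n - n' := (Finset.mem_filter.mp ht.1).2
        have htF : t.2.1 ∈ Fcanon (n - n') := ht.2.1
        have hRTt : RT t = repE hn t.1 hU t.2.1 t.2.2 := by rw [hRT]; exact dif_pos hU
        set σ₀ := cInv hN (invol hN (RT t)) with hσ₀
        have hfpf := isFPF_invol hN (RT t)
        have hinvσ₀ : invol hN σ₀ = invol hN (RT t) := invol_cInv hN hfpf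
        have hex : ∃ t', P σ₀ t' := ⟨t, htF, hU, by rw [hinvσ₀, hRTt]⟩
        rw [dif_pos hex]
        obtain ⟨hF1, hU1, hinv1⟩ := hex.choose_spec
        have heq : invol hN (repE hn hex.choose.1 hU1 hex.choose.2.1 hex.choose.2.2) =
            invol hN (repE hn t.1 hU t.2.1 t.2.2) := by
          rw [hinv1, hinvσ₀, hRTt]
        obtain ⟨h1, h2, h3⟩ := rep_inj hn hN hq2 hU1 hU hF1 htF heq
        exact Prod.ext h1 (Prod.ext h2 h3)
      · -- terms agree
        intro σ hσ
        have hσF := (Finset.mem_filter.mp hσ).1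
        have hσG := (Finset.mem_filter.mp hσ).2
        obtain ⟨U, hU, σs, ρ, hσsF, hinv⟩ := rep_surj hn hN hq2 σ hσF hσG
        have hex : ∃ t, P σ t := ⟨(U, σs, ρ), hσsF, hU, hinv⟩
        rw [dif_pos hex]
        obtain ⟨hF1, hU1, hinv1⟩ := hex.choose_spec
        have hskew : ∀ x y, Mmat A B y x = - Mmat A B x y := fun x y => Mmat_skew A B hA x y
        have ht1 : pterm hN (Mmat A B)
            (repE hn hex.choose.1 hU1 hex.choose.2.1 hex.choose.2.2) =
            pterm hN (Mmat A B) σ :=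
          term_eq_of_invol_eq hN (Mmat A B) hskew hinv1
        rw [← ht1, pterm_repE hn hN hq2]
        simp only [hF]
        rw [dif_pos hU1]
  · -- odd case
    refine ⟨fun _ => 1, fun U => Or.inl rfl, ?_⟩
    have hL : pfaffian ((Matrix.reindex finSumFinEquiv finSumFinEquiv)
        (Matrix.fromBlocks A B (-Bᵀ) (0 : Matrix (Fin n') (Fin n') K))) = 0 := by
      rw [pfaffian, if_neg hEv]
    rw [hL]
    symm
    apply Finset.sum_eq_zero
    intro U hU
    have hc : U.1.card = n - n' := (Finset.mem_filter.mp U.2).2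
    have hodd : ¬ Even (U.1.card) := by
      rw [hc]
      rw [Nat.even_iff] at hEv ⊢
      omega
    rw [pfSub, pfaffian, if_neg hodd]
    ring
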